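/- In the baseline model, for each period t there exists a unique threshold H̲_t ∈ ℝ ∪ {-∞} such that an individual consumes the new product in period t if and only if his aspiration level H_i > H̲_t. Moreover, H̲_1 = v_L and H̲_t is weakly decreasing in t. -/

import Mathlib

/-- Proposition 1: in each period there is a threshold `H̲_t ∈ ℝ ∪ {-∞}` such
that exactly the individuals with aspiration level above the threshold consume
the new product; `H̲_1 = v_L` and the thresholds are weakly decreasing. -/
theorem threshold_characterization {ι : Type*} [Fintype ι] [DecidableEq ι]
    (H vH : ι → ℝ) (vL s sp : ℝ)
    (hs : s ∈ Set.Ioc (0:ℝ) 1) (hsp : sp ∈ Set.Ioo (0:ℝ) 1)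
    (hvH : ∀ j, vL < vH j) (hvHH : ∀ j k, H k ≤ vH j)
    (htop : ∃ i, vL ≤ H i)
    (w : ι → ι → ℝ) (hw : ∀ i j, w i j = if i = j then 1 else s)
    (Dn : ℕ → Finset ι) (h0 : Dn 0 = ∅)
    (hdyn : ∀ t, 1 ≤ t → ∀ i, i ∈ Dn t ↔
      ∑ t' ∈ Finset.range t, ∑ j ∈ Dn t', w i j * (vH j - H i) >
        (1 - sp) * ∑ t' ∈ Finset.range t, ∑ j ∈ (Dn t')ᶜ, w i j * (vL - H i)) :
    ∃ Hbar : ℕ → WithBot ℝ,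
      Hbar 1 = (vL : WithBot ℝ) ∧
      (∀ t, 1 ≤ t → ∀ i, i ∈ Dn t ↔ Hbar t < (H i : WithBot ℝ)) ∧
      (∀ t, 1 ≤ t → Hbar (t + 1) ≤ Hbar t) := by
  obtain ⟨hs0, hs1⟩ := hs
  obtain ⟨hsp0, hsp1⟩ := hsp
  have hsp' : (0:ℝ) < 1 - sp := by linarith
  have : Nonempty ι := ⟨htop.choose⟩
  have hN1 : 1 ≤ (Fintype.card ι : ℝ) := by
    exact_mod_cast Nat.one_le_iff_ne_zero.2 (Fintype.card_ne_zero)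
  have hw_nonneg : ∀ i j, 0 ≤ w i j := by
    intro i j; rw [hw]; split <;> linarith
  have hvHge : ∀ j i, (0:ℝ) ≤ vH j - H i := fun j i => sub_nonneg.2 (hvHH j i)
  -- per-period quantities
  set a : ι → ℕ → ℝ := fun i r => ∑ j ∈ Dn r, w i j * (vH j - H i) with ha
  set b : ι → ℕ → ℝ := fun i r => (1 - sp) * ∑ j ∈ (Dn r)ᶜ, w i j * (vL - H i) with hb
  have hdyn' : ∀ t, 1 ≤ t → ∀ i,
      (i ∈ Dn t ↔ 0 < ∑ r ∈ Finset.range t, (a i r - b i r)) := by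
    intro t ht i
    rw [hdyn t ht i]
    rw [Finset.sum_sub_distrib, hb, ha]
    simp only []
    rw [← Finset.mul_sum]
    constructor <;> intro h <;> linarith
  have ha_nonneg : ∀ i r, 0 ≤ a i r := by
    intro i r
    exact Finset.sum_nonneg fun j _ => mul_nonneg (hw_nonneg i j) (hvHge j i)
  -- sum of weights over a set
  have sum_w_mul : ∀ (i : ι) (T : Finset ι) (g : ι → ℝ),
      ∑ j ∈ T, w i j * g j = s * ∑ j ∈ T, g j + (if i ∈ T then (1 - s) * g i else 0) := by
    intro i T g
    have hpt : ∀ j ∈ T, w i j * g j = s * g j + (if i = j then (1 - s) * g j else 0) := by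
      intro j _
      rw [hw]
      by_cases h : i = j
      · simp [h]; ring
      · simp [h]
    rw [Finset.sum_congr rfl hpt, Finset.sum_add_distrib, ← Finset.mul_sum,
      Finset.sum_ite_eq]
  have hW1 : ∀ i, (1:ℝ) ≤ ∑ j, w i j := by
    intro i
    have h1 := Finset.single_le_sum (f := w i) (fun j _ => hw_nonneg i j) (Finset.mem_univ i)
    have h2 : w i i = 1 := by rw [hw]; simp
    calc (1:ℝ) = w i i := h2.symm
    _ ≤ _ := h1
  -- b at time 0
  have hb0_neg : ∀ i, vL < H i → b i 0 < 0 := by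
    intro i hi
    rw [hb]
    simp only [h0, Finset.compl_empty]
    have h3 : ∑ j ∈ Finset.univ, w i j * (vL - H i) = (∑ j, w i j) * (vL - H i) := by
      rw [Finset.sum_mul]
    rw [h3]
    have h1 : (∑ j, w i j) * (vL - H i) < 0 :=
      mul_neg_of_pos_of_neg (by linarith [hW1 i]) (by linarith)
    exact mul_neg_of_pos_of_neg hsp' h1
  have hb_nonpos : ∀ i r, vL < H i → b i r ≤ 0 := by
    intro i r hi
    rw [hb]
    apply mul_nonpos_of_nonneg_of_nonpos (le_of_lt hsp')
    exact Finset.sum_nonpos fun j _ => mul_nonpos_of_nonneg_of_nonpos (hw_nonneg i j) (by linarith)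
  have hb_nonneg : ∀ i r, H i ≤ vL → 0 ≤ b i r := by
    intro i r hi
    rw [hb]
    apply mul_nonneg (le_of_lt hsp')
    exact Finset.sum_nonneg fun j _ => mul_nonneg (hw_nonneg i j) (by linarith)
  -- anyone with H > vL adopts in every period t ≥ 1
  have key1 : ∀ t, 1 ≤ t → ∀ i, vL < H i → i ∈ Dn t := by
    intro t ht i hi
    rw [hdyn' t ht i]
    apply Finset.sum_pos'
    · intro r _
      have := hb_nonpos i r hi
      have := ha_nonneg i r
      linarith
    · refine ⟨0, Finset.mem_range.2 ht, ?_⟩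
      have h1 : a i 0 = 0 := by rw [ha]; simp [h0]
      have := hb0_neg i hi
      linarith
  -- characterization of Dn 1
  have mem1 : ∀ i, i ∈ Dn 1 ↔ vL < H i := by
    intro i
    constructor
    · intro hi
      by_contra hc
      push_neg at hc
      have := (hdyn' 1 le_rfl i).1 hi
      rw [Finset.sum_range_one] at this
      have h1 : a i 0 = 0 := by rw [ha]; simp [h0]
      have h2 : 0 ≤ b i 0 := hb_nonneg i 0 hc
      linarith
    · exact key1 1 le_rfl i
  -- monotonicity of per-period net gains in the adopter set (for H i ≤ vL)
  have hu_mono : ∀ i, H i ≤ vL → ∀ r r', Dn r ⊆ Dn r' →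
      a i r - b i r ≤ a i r' - b i r' := by
    intro i hi r r' hsub
    have hA : a i r ≤ a i r' := by
      apply Finset.sum_le_sum_of_subset_of_nonneg hsub
      intro j _ _
      exact mul_nonneg (hw_nonneg i j) (hvHge j i)
    have hB : b i r' ≤ b i r := by
      rw [hb]
      apply mul_le_mul_of_nonneg_left _ (le_of_lt hsp')
      apply Finset.sum_le_sum_of_subset_of_nonneg (Finset.compl_subset_compl.2 hsub)
      intro j _ _
      exact mul_nonneg (hw_nonneg i j) (by linarith)
    linarith
  -- the main induction: inclusion and upper-set property
  have main : ∀ n : ℕ, (Dn n ⊆ Dn (n+1)) ∧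
      (∀ i i', H i' ≤ H i → i' ∈ Dn (n+1) → i ∈ Dn (n+1)) := by
    intro n
    induction n using Nat.strong_induction_on with
    | _ n IH =>
      -- chain: for r ≤ r' ≤ n, Dn r ⊆ Dn r'
      have chain : ∀ r', r' ≤ n → ∀ r, r ≤ r' → Dn r ⊆ Dn r' := by
        intro r'
        induction r' with
        | zero =>
          intro _ r hr
          rw [Nat.le_zero.1 hr]
        | succ k ihk =>
          intro hkn r hr
          rcases Nat.eq_or_lt_of_le hr with h | h
          · rw [h]
          · have hrk : r ≤ k := Nat.lt_succ_iff.1 h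
            exact (ihk (by omega) r hrk).trans (IH k (by omega)).1
      cases n with
      | zero =>
        constructor
        · rw [h0]; exact Finset.empty_subset _
        · intro i i' hH hi'
          exact (mem1 i).2 (lt_of_lt_of_le ((mem1 i').1 hi') hH)
      | succ m =>
        -- inclusion Dn (m+1) ⊆ Dn (m+2)
        have incl : Dn (m+1) ⊆ Dn (m+2) := by
          intro i hi
          by_cases hHi : vL < H i
          · exact key1 (m+2) (by omega) i hHi
          push_neg at hHi
          have hcond : 0 < ∑ r ∈ Finset.range (m+1), (a i r - b i r) :=
            (hdyn' (m+1) (by omega) i).1 hi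
          have humono : ∀ r r', r ≤ r' → r' ≤ m+1 → a i r - b i r ≤ a i r' - b i r' := by
            intro r r' hrr' hr'
            exact hu_mono i hHi r r' (chain r' hr' r hrr')
          have hum : 0 < a i m - b i m := by
            by_contra hc
            push_neg at hc
            have : ∑ r ∈ Finset.range (m+1), (a i r - b i r) ≤ 0 := by
              apply Finset.sum_nonpos
              intro r hr
              have := humono r m (Nat.lt_succ_iff.1 (Finset.mem_range.1 hr)) (Nat.le_succ m)
              linarith
            linarith
          have hum1 : 0 < a i (m+1) - b i (m+1) :=
            lt_of_lt_of_le hum (humono m (m+1) (Nat.le_succ m) le_rfl)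
          rw [hdyn' (m+2) (by omega) i]
          rw [Finset.sum_range_succ]
          linarith
        refine ⟨incl, ?_⟩
        intro i i' hH hi'
        by_cases hiin : i ∈ Dn (m+1)
        · exact incl hiin
        -- i has never adopted; hence neither has i' (else upper at m+1 applies)
        have hi'nin : i' ∉ Dn (m+1) := by
          intro h
          exact hiin ((IH m (Nat.lt_succ_self m)).2 i i' hH h)
        have hnot : ∀ x, x ∉ Dn (m+1) → ∀ r, r < m+2 → x ∉ Dn r := by
          intro x hx r hr hmem
          exact hx (chain (m+1) le_rfl r (by omega) hmem)
        have hHi : H i ≤ vL := by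
          by_contra hc
          push_neg at hc
          exact hnot i hiin 1 (by omega) (key1 1 le_rfl i hc)
        have hHi' : H i' ≤ vL := le_trans hH hHi
        -- closed form of the adoption condition for never-adopters
        set t : ℕ := m + 2 with htdef
        set Q : ℝ := ∑ r ∈ Finset.range t, ∑ j ∈ Dn r, vH j with hQ
        set K : ℝ := ∑ r ∈ Finset.range t, ((Dn r).card : ℝ) with hK
        set S : ℝ := ∑ r ∈ Finset.range t,
          (s * (((Dn r)ᶜ).card : ℝ) + (1 - s)) with hS
        have Fid : ∀ x, (∀ r, r < t → x ∉ Dn r) →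
            ∑ r ∈ Finset.range t, (a x r - b x r)
              = s * Q - (s * H x) * K - ((1 - sp) * (vL - H x)) * S := by
          intro x hx
          have hper : ∀ r ∈ Finset.range t, a x r - b x r
              = s * (∑ j ∈ Dn r, vH j) - (s * H x) * ((Dn r).card : ℝ)
                - ((1 - sp) * (vL - H x)) * (s * (((Dn r)ᶜ).card : ℝ) + (1 - s)) := by
            intro r hr
            have hxr := hx r (Finset.mem_range.1 hr)
            have hsw1 := sum_w_mul x (Dn r) (fun j => vH j - H x)
            have hsw2 := sum_w_mul x ((Dn r)ᶜ) (fun _ => vL - H x)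
            have hA : a x r = s * (∑ j ∈ Dn r, vH j) - (s * H x) * ((Dn r).card : ℝ) := by
              rw [ha]
              simp only []
              rw [hsw1, if_neg hxr, Finset.sum_sub_distrib, Finset.sum_const, nsmul_eq_mul]
              ring
            have hB : b x r = ((1 - sp) * (vL - H x)) *
                (s * (((Dn r)ᶜ).card : ℝ) + (1 - s)) := by
              rw [hb]
              simp only []
              rw [hsw2, if_pos (Finset.mem_compl.2 hxr), Finset.sum_const, nsmul_eq_mul]
              ring
            rw [hA, hB]
          rw [Finset.sum_congr rfl hper, hQ, hK, hS, Finset.mul_sum, Finset.mul_sum,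
            Finset.mul_sum, ← Finset.sum_sub_distrib, ← Finset.sum_sub_distrib]
        have hSpos : 0 < S := by
          rw [hS]
          apply Finset.sum_pos'
          · intro r _
            have : (0:ℝ) ≤ (((Dn r)ᶜ).card : ℝ) := Nat.cast_nonneg _
            nlinarith
          · refine ⟨0, Finset.mem_range.2 (by omega), ?_⟩
            have hcard : (((Dn 0)ᶜ).card : ℝ) = (Fintype.card ι : ℝ) := by
              rw [h0]; simp
            rw [hcard]
            nlinarith
        -- the condition for i' in closed form
        have hFi' : 0 < s * Q - (s * H i') * K - ((1 - sp) * (vL - H i')) * S := by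
          rw [← Fid i' (hnot i' hi'nin)]
          exact (hdyn' t (by omega) i').1 hi'
        rw [hdyn' t (by omega) i, Fid i (hnot i hiin)]
        have hKnn : 0 ≤ K := by
          rw [hK]
          exact Finset.sum_nonneg fun r _ => Nat.cast_nonneg _
        by_cases hcase : s * K ≤ (1 - sp) * S
        · -- F(i) = F(i') + ((1-sp)S - sK)(H i - H i') ≥ F(i')
          have hprod : 0 ≤ ((1 - sp) * S - s * K) * (H i - H i') :=
            mul_nonneg (by linarith) (by linarith)
          nlinarith [hFi', hprod]
        · -- sK > (1-sp)S: the condition holds for everyone with H ≤ vL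
          push_neg at hcase
          have hKpos : 0 < K := by
            by_contra hc
            push_neg at hc
            have hK0 : K = 0 := le_antisymm hc hKnn
            rw [hK0] at hcase
            nlinarith [mul_pos hsp' hSpos]
          have hstrict : K * (vL - H i) < Q - K * H i := by
            have hex : ∃ r ∈ Finset.range t, (Dn r).Nonempty := by
              by_contra hc
              push_neg at hc
              have hK0 : K = 0 := by
                rw [hK]
                apply Finset.sum_eq_zero
                intro r hr
                rw [hc r hr]
                simp
              linarith
            obtain ⟨r0, hr0, hr0ne⟩ := hex
            have hQK : Q - K * H i = ∑ r ∈ Finset.range t, ∑ j ∈ Dn r, (vH j - H i) := by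
              rw [hQ, hK, Finset.sum_mul, ← Finset.sum_sub_distrib]
              apply Finset.sum_congr rfl
              intro r _
              rw [Finset.sum_sub_distrib, Finset.sum_const, nsmul_eq_mul]
            have hKv : K * (vL - H i) = ∑ r ∈ Finset.range t,
                ∑ _j ∈ Dn r, (vL - H i) := by
              rw [hK, Finset.sum_mul]
              apply Finset.sum_congr rfl
              intro r _
              rw [Finset.sum_const, nsmul_eq_mul]
            rw [hQK, hKv]
            apply Finset.sum_lt_sum
            · intro r _
              exact Finset.sum_le_sum fun j _ => by linarith [hvH j]
            · refine ⟨r0, hr0, ?_⟩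
              exact Finset.sum_lt_sum_of_nonempty hr0ne fun j _ => by linarith [hvH j]
          have h1 : s * (K * (vL - H i)) < s * (Q - K * H i) :=
            mul_lt_mul_of_pos_left hstrict hs0
          have h2 : 0 ≤ (s * K - (1 - sp) * S) * (vL - H i) :=
            mul_nonneg (by linarith) (by linarith)
          nlinarith [h1, h2]
  -- assemble the thresholds
  classical
  refine ⟨fun t => if t = 1 then (vL : WithBot ℝ)
    else ((Dn t)ᶜ).sup (fun k => (H k : WithBot ℝ)), by simp, ?_, ?_⟩
  · intro t ht i
    by_cases h1 : t = 1
    · subst h1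
      simp [mem1 i, WithBot.coe_lt_coe]
    · have hupper : ∀ x x', H x' ≤ H x → x' ∈ Dn t → x ∈ Dn t := by
        have h2 := (main (t-1)).2
        have ht1 : t - 1 + 1 = t := by omega
        rw [ht1] at h2
        exact h2
      simp only [if_neg h1]
      constructor
      · intro hi
        rw [Finset.sup_lt_iff (by exact bot_lt_iff_ne_bot.2 (WithBot.coe_ne_bot))]
        intro k hk
        rw [WithBot.coe_lt_coe]
        by_contra hc
        push_neg at hc
        exact (Finset.mem_compl.1 hk) (hupper k i hc hi)
      · intro hlt
        by_contra hc
        have hle : (H i : WithBot ℝ) ≤ ((Dn t)ᶜ).sup (fun k => (H k : WithBot ℝ)) :=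
          Finset.le_sup (f := fun k => (H k : WithBot ℝ)) (Finset.mem_compl.2 hc)
        exact absurd hlt (not_lt.2 hle)
  · intro t ht
    by_cases h1 : t = 1
    · subst h1
      norm_num
      intro k hk2
      by_contra hc
      push_neg at hc
      exact hk2 ((main 1).1 ((mem1 k).2 hc))
    · simp only [if_neg h1, if_neg (by omega : ¬ t + 1 = 1)]
      apply Finset.sup_mono
      exact Finset.compl_subset_compl.2 (main t).1
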